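/- arXiv:2412.07428 — 3 statements merged into one kernel-verified Lean document; each statement's English description precedes it below -/
import Mathlib

section
/- The function g(x) = a*x / log2(1 + b*x) on x > 0 (with a, b > 0) is concave; equivalently its second derivative is nonpositive for all x > 0. -/
open Real Set

private lemma key_ineq : ∀ t : ℝ, 0 < t → 2 * t ≤ (t + 2) * Real.log (1 + t) := by
  intro t ht
  set φ : ℝ → ℝ := fun y => (y + 2) * Real.log (1 + y) - 2 * y with hφ
  have hder : ∀ y : ℝ, 0 ≤ y →
      HasDerivAt φ (Real.log (1 + y) + (y + 2) / (1 + y) - 2) y := by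
    intro y hy
    have h1 : (1 : ℝ) + y ≠ 0 := by linarith
    have hlog : HasDerivAt (fun z : ℝ => Real.log (1 + z)) (1 / (1 + y)) y := by
      have : HasDerivAt (fun z : ℝ => 1 + z) 1 y := (hasDerivAt_id y).const_add 1
      simpa using this.log h1
    have h2 : HasDerivAt (fun z : ℝ => (z + 2) * Real.log (1 + z))
        (1 * Real.log (1 + y) + (y + 2) * (1 / (1 + y))) y :=
      ((hasDerivAt_id y).add_const 2).mul hlog
    have h3 : HasDerivAt (fun z : ℝ => 2 * z) 2 y := by
      simpa using (hasDerivAt_id y).const_mul 2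
    have := h2.fun_sub h3
    refine this.congr_deriv ?_
    ring
  have hmono : MonotoneOn φ (Ici (0:ℝ)) := by
    apply monotoneOn_of_deriv_nonneg (convex_Ici 0)
    · exact fun y hy => (hder y hy).continuousAt.continuousWithinAt
    · rw [interior_Ici]
      exact fun y hy => (hder y (le_of_lt hy)).differentiableAt.differentiableWithinAt
    · rw [interior_Ici]
      intro y hy
      rw [(hder y (le_of_lt hy)).deriv]
      have h1 : (0:ℝ) < 1 + y := by linarith [mem_Ioi.mp hy]
      have hy' : 0 < y := mem_Ioi.mp hy
      have hlog : 1 - (1 + y)⁻¹ ≤ Real.log (1 + y) := Real.one_sub_inv_le_log_of_pos h1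
      have e1 : (y + 2) / (1 + y) - 2 = -(y / (1 + y)) := by field_simp; ring
      have e2 : 1 - (1 + y)⁻¹ = y / (1 + y) := by field_simp; ring
      rw [e2] at hlog
      linarith [hlog, e1.ge, e1.le]
  have h0 : φ 0 ≤ φ t := hmono (by simp) (le_of_lt ht |> mem_Ici.mpr) (le_of_lt ht)
  simp [hφ] at h0
  linarith

/-- The uplink energy function `g(x) = a x / log₂(1 + b x)` is concave on `x > 0`. -/
theorem energy_function_concave (a b : ℝ) (ha : 0 < a) (hb : 0 < b) :
    ConcaveOn ℝ (Set.Ioi (0 : ℝ)) (fun x => a * x / Real.logb 2 (1 + b * x)) := by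
  have hfun : (fun x => a * x / Real.logb 2 (1 + b * x)) =
      fun x => (a * Real.log 2) * x / Real.log (1 + b * x) := by
    funext x
    rw [Real.logb, div_div_eq_mul_div]
    ring_nf
  rw [hfun]
  set c : ℝ := a * Real.log 2 with hc
  have hcpos : 0 < c := mul_pos ha (Real.log_pos one_lt_two)
  set L : ℝ → ℝ := fun x => Real.log (1 + b * x) with hL
  -- basic facts for x > 0
  have hu : ∀ x : ℝ, 0 < x → (0:ℝ) < 1 + b * x := fun x hx => by positivity
  have hLpos : ∀ x : ℝ, 0 < x → 0 < L x := by
    intro x hx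
    apply Real.log_pos
    nlinarith [mul_pos hb hx]
  have hLder : ∀ x : ℝ, 0 < x → HasDerivAt L (b / (1 + b * x)) x := by
    intro x hx
    have h1 : HasDerivAt (fun z : ℝ => 1 + b * z) b x := by
      simpa using ((hasDerivAt_id x).const_mul b).const_add 1
    simpa using h1.log (ne_of_gt (hu x hx))
  -- first derivative
  set f1 : ℝ → ℝ := fun x => c * ((1 + b * x) * L x - b * x) / ((1 + b * x) * (L x) ^ 2)
    with hf1
  -- second derivative
  set f2 : ℝ → ℝ := fun x =>
    c * b * (b * x * L x - 2 * (1 + b * x) * L x + 2 * (b * x)) /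
      ((1 + b * x) ^ 2 * (L x) ^ 3) with hf2
  apply concaveOn_of_hasDerivWithinAt2_nonpos (f' := f1) (f'' := f2) (convex_Ioi 0)
  · -- continuity
    intro x hx
    have hx' : (0:ℝ) < x := hx
    apply ContinuousWithinAt.div
    · exact (continuous_const.mul continuous_id).continuousWithinAt
    · exact ((hLder x hx').continuousAt).continuousWithinAt
    · exact ne_of_gt (hLpos x hx')
  · -- first derivative
    rw [interior_Ioi]
    intro x hx
    have hx' : (0:ℝ) < x := hx
    have hLx := hLpos x hx'
    have hux := hu x hx'
    have hnum : HasDerivAt (fun z => c * z) c x := by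
      simpa using (hasDerivAt_id x).const_mul c
    have hd : HasDerivAt (fun z => c * z / L z)
        ((c * L x - c * x * (b / (1 + b * x))) / (L x) ^ 2) x := by
      exact hnum.div (hLder x hx') (ne_of_gt hLx)
    have heq : (c * L x - c * x * (b / (1 + b * x))) / (L x) ^ 2 = f1 x := by
      rw [hf1]
      field_simp
    rw [heq] at hd
    exact hd.hasDerivWithinAt
  · -- second derivative
    rw [interior_Ioi]
    intro x hx
    have hx' : (0:ℝ) < x := hx
    have hLx := hLpos x hx'
    have hux := hu x hx'
    have hP : HasDerivAt (fun z => c * ((1 + b * z) * L z - b * z)) (c * (b * L x)) x := by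
      have h1 : HasDerivAt (fun z : ℝ => 1 + b * z) b x := by
        simpa using ((hasDerivAt_id x).const_mul b).const_add 1
      have h2 := h1.fun_mul (hLder x hx')
      have h3 : HasDerivAt (fun z : ℝ => b * z) b x := by
        simpa using (hasDerivAt_id x).const_mul b
      have h4 := (h2.fun_sub h3).const_mul c
      refine h4.congr_deriv ?_
      field_simp
      ring
    have hQ : HasDerivAt (fun z => (1 + b * z) * (L z) ^ 2)
        (b * (L x) ^ 2 + 2 * b * L x) x := by
      have h1 : HasDerivAt (fun z : ℝ => 1 + b * z) b x := by
        simpa using ((hasDerivAt_id x).const_mul b).const_add 1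
      have h2 : HasDerivAt (fun z => (L z) ^ 2) (2 * L x * (b / (1 + b * x))) x := by
        simpa using ((hLder x hx').fun_pow 2)
      have h3 := h1.fun_mul h2
      refine h3.congr_deriv ?_
      field_simp
    have hQne : (1 + b * x) * (L x) ^ 2 ≠ 0 := by positivity
    have hd := hP.div hQ hQne
    have heq : (c * (b * L x) * ((1 + b * x) * (L x) ^ 2) -
        c * ((1 + b * x) * L x - b * x) * (b * (L x) ^ 2 + 2 * b * L x)) /
        ((1 + b * x) * (L x) ^ 2) ^ 2 = f2 x := by
      rw [hf2]
      field_simp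
      ring
    rw [heq] at hd
    exact hd.hasDerivWithinAt
  · -- nonpositivity
    rw [interior_Ioi]
    intro x hx
    have hx' : (0:ℝ) < x := hx
    have hLx := hLpos x hx'
    have hux := hu x hx'
    have htpos : 0 < b * x := mul_pos hb hx'
    have hkey := key_ineq (b * x) htpos
    rw [hf2]
    apply div_nonpos_of_nonpos_of_nonneg
    · have hnum : b * x * L x - 2 * (1 + b * x) * L x + 2 * (b * x) ≤ 0 := by
        have : L x = Real.log (1 + b * x) := rfl
        nlinarith [hkey]
      nlinarith [mul_pos hcpos hb]
    · positivity
end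

section
/- Define g_tilde(x) = (a*b^2*x + 2*a*b) * ln(1 + b*x) - 2*a*b^2*x for x >= 0 with constants a, b > 0. Then g_tilde is convex on [0, infinity), its derivative vanishes at x = 0, and g_tilde(x) >= 0 for all x >= 0. -/
lemma gtilde_log_aux {s : ℝ} (hs : 1 ≤ s) : 1 - 1 / s ≤ Real.log s := by
  have hs0 : (0 : ℝ) < s := by linarith
  have h := Real.log_le_sub_one_of_pos (show (0:ℝ) < 1 / s by positivity)
  rw [one_div, Real.log_inv] at h
  rw [one_div]
  linarith

lemma gtilde_mono_aux {s t : ℝ} (hs : 1 ≤ s) (hst : s ≤ t) :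
    Real.log s + 1 / s ≤ Real.log t + 1 / t := by
  have hs0 : (0 : ℝ) < s := by linarith
  have ht0 : (0 : ℝ) < t := by linarith
  have h := Real.log_le_sub_one_of_pos (show (0:ℝ) < s / t by positivity)
  rw [Real.log_div hs0.ne' ht0.ne'] at h
  have key : 0 ≤ (t - s) * (s - 1) := mul_nonneg (by linarith) (by linarith)
  have h2 : 1 / s - 1 / t ≤ 1 - s / t := by
    rw [div_sub_div _ _ hs0.ne' ht0.ne', sub_div' ht0.ne', div_le_div_iff₀ (by positivity) ht0]
    nlinarith
  linarith

lemma gtilde_hasDerivAt (a b : ℝ) (x : ℝ) (hx : 0 ≤ x) (hb : 0 < b) :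
    HasDerivAt (fun x => (a * b ^ 2 * x + 2 * a * b) * Real.log (1 + b * x) - 2 * a * b ^ 2 * x)
      (a * b ^ 2 * (Real.log (1 + b * x) + 1 / (1 + b * x) - 1)) x := by
  have hpos : 0 < 1 + b * x := by positivity
  have h1 : HasDerivAt (fun x : ℝ => 1 + b * x) b x := by
    simpa using ((hasDerivAt_id x).const_mul b).const_add 1
  have hlog : HasDerivAt (fun x : ℝ => Real.log (1 + b * x)) (b / (1 + b * x)) x := by
    have := (Real.hasDerivAt_log hpos.ne').comp x h1
    simpa [div_eq_inv_mul, Function.comp_def] using this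
  have hlin : HasDerivAt (fun x : ℝ => a * b ^ 2 * x + 2 * a * b) (a * b ^ 2) x := by
    simpa using ((hasDerivAt_id x).const_mul (a * b ^ 2)).add_const (2 * a * b)
  have hmul := hlin.mul hlog
  have hfin := hmul.sub (((hasDerivAt_id x).const_mul (2 * a * b ^ 2)))
  refine hfin.congr_deriv ?_
  have : (a * b ^ 2 * x + 2 * a * b) * (b / (1 + b * x))
      = a * b ^ 2 * ((b * x + 2) / (1 + b * x)) := by ring
  field_simp
  ring

/-- `g̃(x) = (a b² x + 2 a b) ln(1 + b x) - 2 a b² x` is convex on `[0, ∞)`,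
has vanishing derivative at `0`, and is nonnegative on `[0, ∞)`. -/
theorem gtilde_convex_nonneg (a b : ℝ) (ha : 0 < a) (hb : 0 < b) :
    ConvexOn ℝ (Set.Ici (0 : ℝ))
      (fun x => (a * b ^ 2 * x + 2 * a * b) * Real.log (1 + b * x) - 2 * a * b ^ 2 * x) ∧
    deriv (fun x => (a * b ^ 2 * x + 2 * a * b) * Real.log (1 + b * x) - 2 * a * b ^ 2 * x) 0
      = 0 ∧
    ∀ x : ℝ, 0 ≤ x →
      0 ≤ (a * b ^ 2 * x + 2 * a * b) * Real.log (1 + b * x) - 2 * a * b ^ 2 * x := by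
  set f : ℝ → ℝ :=
    fun x => (a * b ^ 2 * x + 2 * a * b) * Real.log (1 + b * x) - 2 * a * b ^ 2 * x with hf
  have hd : ∀ x : ℝ, 0 ≤ x →
      HasDerivAt f (a * b ^ 2 * (Real.log (1 + b * x) + 1 / (1 + b * x) - 1)) x :=
    fun x hx => gtilde_hasDerivAt a b x hx hb
  have hderiv : ∀ x : ℝ, 0 ≤ x →
      deriv f x = a * b ^ 2 * (Real.log (1 + b * x) + 1 / (1 + b * x) - 1) :=
    fun x hx => (hd x hx).deriv
  have hcont : ContinuousOn f (Set.Ici 0) :=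
    fun x hx => ((hd x hx).continuousAt).continuousWithinAt
  have hdiff : DifferentiableOn ℝ f (interior (Set.Ici 0)) := by
    rw [interior_Ici]
    exact fun x hx => ((hd x (le_of_lt hx)).differentiableAt).differentiableWithinAt
  have hone : ∀ x : ℝ, 0 ≤ x → (1 : ℝ) ≤ 1 + b * x := by
    intro x hx; nlinarith
  have hconv : ConvexOn ℝ (Set.Ici (0 : ℝ)) f := by
    apply MonotoneOn.convexOn_of_deriv (convex_Ici 0) hcont hdiff
    rw [interior_Ici]
    intro x hx y hy hxy
    rw [hderiv x (le_of_lt hx), hderiv y (le_of_lt hy)]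
    have := gtilde_mono_aux (hone x (le_of_lt hx))
      (show 1 + b * x ≤ 1 + b * y by nlinarith)
    have hab : 0 ≤ a * b ^ 2 := by positivity
    nlinarith
  have hnonneg : ∀ x : ℝ, 0 ≤ x → 0 ≤ f x := by
    have hmono : MonotoneOn f (Set.Ici 0) := by
      apply monotoneOn_of_deriv_nonneg (convex_Ici 0) hcont hdiff
      rw [interior_Ici]
      intro x hx
      rw [hderiv x (le_of_lt hx)]
      have h1 := gtilde_log_aux (hone x (le_of_lt hx))
      have hab : 0 ≤ a * b ^ 2 := by positivity
      nlinarith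
    intro x hx
    have h0 : f 0 = 0 := by simp [hf]
    have := hmono Set.self_mem_Ici hx hx
    linarith
  refine ⟨hconv, ?_, hnonneg⟩
  have := hderiv 0 le_rfl
  simp at this
  simpa [hf] using this
end

section
/- For gamma > 0, the function Psi(gamma) = gamma * (2^{1/gamma} - 1) = gamma * (e^{ln(2)/gamma} - 1) is convex on (0, infinity). -/
open Real Set Filter

private noncomputable def psiD1 (x : ℝ) : ℝ :=
  Real.exp (Real.log 2 / x) * (1 - Real.log 2 / x) - 1

private lemma psi_hasDerivAt {x : ℝ} (hx : (0:ℝ) < x) :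
    HasDerivAt (fun γ => γ * (Real.exp (Real.log 2 / γ) - 1)) (psiD1 x) x := by
  have hx0 : x ≠ 0 := ne_of_gt hx
  have h1 : HasDerivAt (fun γ : ℝ => Real.log 2 / γ)
      (Real.log 2 * -(x ^ 2)⁻¹) x := by
    simpa [div_eq_mul_inv] using (hasDerivAt_inv hx0).const_mul (Real.log 2)
  have h2 := (h1.exp.sub_const 1)
  have h3 := (hasDerivAt_id x).mul h2
  refine h3.congr_deriv ?_
  unfold psiD1 id
  field_simp
  ring

private lemma psiD1_hasDerivAt {x : ℝ} (hx : (0:ℝ) < x) :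
    HasDerivAt psiD1 (Real.exp (Real.log 2 / x) * (Real.log 2 ^ 2 / x ^ 3)) x := by
  have hx0 : x ≠ 0 := ne_of_gt hx
  have h1 : HasDerivAt (fun γ : ℝ => Real.log 2 / γ)
      (Real.log 2 * -(x ^ 2)⁻¹) x := by
    simpa [div_eq_mul_inv] using (hasDerivAt_inv hx0).const_mul (Real.log 2)
  have h2 := h1.exp
  have h3 : HasDerivAt (fun γ : ℝ => 1 - Real.log 2 / γ)
      (-(Real.log 2 * -(x ^ 2)⁻¹)) x := (h1.const_sub 1)
  have h4 := (h2.mul h3).sub_const 1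
  refine h4.congr_deriv ?_
  field_simp
  ring

/-- `Ψ(γ) = γ (e^{ln 2 / γ} - 1)` is convex on `(0, ∞)`. -/
theorem psi_convex :
    ConvexOn ℝ (Set.Ioi (0 : ℝ))
      (fun γ => γ * (Real.exp (Real.log 2 / γ) - 1)) := by
  set f : ℝ → ℝ := fun γ => γ * (Real.exp (Real.log 2 / γ) - 1) with hf
  have hEq : Set.EqOn (deriv f) psiD1 (Set.Ioi 0) := fun x hx =>
    (psi_hasDerivAt (Set.mem_Ioi.mp hx)).deriv
  have hEv : ∀ x ∈ Set.Ioi (0:ℝ), deriv f =ᶠ[nhds x] psiD1 := fun x hx =>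
    Filter.eventuallyEq_of_mem (isOpen_Ioi.mem_nhds hx) hEq
  apply convexOn_of_deriv2_nonneg' (convex_Ioi 0)
  · exact fun x hx => (psi_hasDerivAt (Set.mem_Ioi.mp hx)).differentiableAt.differentiableWithinAt
  · intro x hx
    exact ((psiD1_hasDerivAt (Set.mem_Ioi.mp hx)).differentiableAt.congr_of_eventuallyEq
      (hEv x hx)).differentiableWithinAt
  · intro x hx
    have hx' : (0:ℝ) < x := Set.mem_Ioi.mp hx
    have : deriv^[2] f x = Real.exp (Real.log 2 / x) * (Real.log 2 ^ 2 / x ^ 3) := by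
      have := (hEv x hx).deriv_eq
      simp only [Function.iterate_succ, Function.iterate_zero, Function.comp_apply, id]
      rw [this, (psiD1_hasDerivAt hx').deriv]
    rw [this]
    positivity
end
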